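/- Let σ̂ be the barycenter of an open simplex σ ⊆ ℝ^m spanned by affinely independent a₀,…,aₙ. Then σ̂ ∈ σ, and for every point p ∈ closure(σ) with p ≠ σ̂ there exist a unique u ∈ ∂σ and a unique t ∈ [0,1) such that p = (1−t)u + t·σ̂. -/

import Mathlib

/-- The open simplex spanned by the points `a 0, …, a n`. -/
def openSimplex {m n : ℕ} (a : Fin (n + 1) → (Fin m → ℝ)) : Set (Fin m → ℝ) :=
  {x | ∃ t : Fin (n + 1) → ℝ, (∀ i, 0 < t i) ∧ ∑ i, t i = 1 ∧ ∑ i, t i • a i = x}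

namespace Stmt16

variable {m n : ℕ} {a : Fin (n + 1) → (Fin m → ℝ)}

lemma coeff_unique (ha : AffineIndependent ℝ a) {t r : Fin (n+1) → ℝ}
    (ht : ∑ i, t i = 1) (hr : ∑ i, r i = 1)
    (h : ∑ i, t i • a i = ∑ i, r i • a i) : t = r := by
  refine (affineIndependent_iff_eq_of_fintype_affineCombination_eq ℝ a).mp ha t r ht hr ?_
  rw [Finset.affineCombination_eq_linear_combination _ a t ht,
    Finset.affineCombination_eq_linear_combination _ a r hr]
  exact h

lemma closure_openSimplex (a : Fin (n + 1) → (Fin m → ℝ)) :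
    closure (openSimplex a)
      = (fun t : Fin (n+1) → ℝ => ∑ i, t i • a i) '' stdSimplex ℝ (Fin (n+1)) := by
  have hcont : Continuous fun t : Fin (n+1) → ℝ => ∑ i, t i • a i :=
    continuous_finset_sum _ fun i _ => (continuous_apply i).smul continuous_const
  have hclosed : IsClosed ((fun t : Fin (n+1) → ℝ => ∑ i, t i • a i) '' stdSimplex ℝ (Fin (n+1))) :=
    ((isCompact_stdSimplex _ _).image hcont).isClosed
  apply le_antisymm
  · apply closure_minimal _ hclosed
    rintro x ⟨t, ht0, ht1, rfl⟩
    exact ⟨t, ⟨fun i => (ht0 i).le, ht1⟩, rfl⟩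
  · rintro x ⟨t, ⟨ht0, ht1⟩, rfl⟩
    set c : Fin m → ℝ := ((n : ℝ)+1)⁻¹ • ∑ i, a i with hc
    have hN : (0:ℝ) < (n:ℝ) + 1 := by positivity
    -- approximating sequence
    have hmem : ∀ k : ℕ, (1 - 1/((k:ℝ)+1)) • (∑ i, t i • a i) + (1/((k:ℝ)+1)) • c
        ∈ openSimplex a := by
      intro k
      have hK : (0:ℝ) < (k:ℝ) + 1 := by positivity
      have hε0 : (0:ℝ) < 1/((k:ℝ)+1) := by positivity
      have hε1 : 1/((k:ℝ)+1) ≤ 1 := by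
        rw [div_le_one hK]; linarith [Nat.cast_nonneg (α := ℝ) k]
      refine ⟨fun i => (1 - 1/((k:ℝ)+1)) * t i + (1/((k:ℝ)+1)) * ((n:ℝ)+1)⁻¹, ?_, ?_, ?_⟩
      · intro i
        have : 0 ≤ (1 - 1/((k:ℝ)+1)) * t i := by
          apply mul_nonneg (by linarith) (ht0 i)
        have h2 : 0 < (1/((k:ℝ)+1)) * ((n:ℝ)+1)⁻¹ := by positivity
        linarith
      · rw [Finset.sum_add_distrib, ← Finset.mul_sum, ht1, Finset.sum_const,
          Finset.card_univ, Fintype.card_fin, nsmul_eq_mul]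
        push_cast
        field_simp
        ring
      · rw [hc, smul_smul, Finset.smul_sum, Finset.smul_sum, ← Finset.sum_add_distrib]
        exact Finset.sum_congr rfl fun i _ => by rw [smul_smul, add_smul]
    show (∑ i, t i • a i) ∈ closure (openSimplex a)
    have htend : Filter.Tendsto (fun k : ℕ =>
        (1 - 1/((k:ℝ)+1)) • (∑ i, t i • a i) + (1/((k:ℝ)+1)) • c) Filter.atTop
        (nhds (∑ i, t i • a i)) := by
      have h0 : Filter.Tendsto (fun k : ℕ => 1/((k:ℝ)+1)) Filter.atTop (nhds 0) :=
        tendsto_one_div_add_atTop_nhds_zero_nat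
      have := ((h0.const_sub 1).smul
        (tendsto_const_nhds (x := ∑ i, t i • a i))).add
        (h0.smul (tendsto_const_nhds (x := c)))
      simpa using this
    exact mem_closure_of_tendsto htend (Filter.Eventually.of_forall hmem)

end Stmt16

open Stmt16 in
theorem stmt_16 (m n : ℕ) (hn : 1 ≤ n) (a : Fin (n + 1) → (Fin m → ℝ))
    (ha : AffineIndependent ℝ a)
    (bary : Fin m → ℝ) (hbary : bary = ((n : ℝ) + 1)⁻¹ • ∑ i, a i) :
    bary ∈ openSimplex a ∧
    ∀ p ∈ closure (openSimplex a), p ≠ bary →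
      ∃! ut : (Fin m → ℝ) × ℝ,
        ut.1 ∈ closure (openSimplex a) \ openSimplex a ∧
        ut.2 ∈ Set.Ico (0:ℝ) 1 ∧
        p = (1 - ut.2) • ut.1 + ut.2 • bary := by
  have hN : (0:ℝ) < (n:ℝ) + 1 := by positivity
  have hNne : ((n:ℝ) + 1) ≠ 0 := hN.ne'
  have hsum_inv : ∑ _i : Fin (n+1), ((n:ℝ)+1)⁻¹ = 1 := by
    rw [Finset.sum_const, Finset.card_univ, Fintype.card_fin, nsmul_eq_mul]
    push_cast; field_simp
  have hbary_sum : ∑ i, ((n:ℝ)+1)⁻¹ • a i = bary := by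
    rw [hbary, Finset.smul_sum]
  have hbary_mem : bary ∈ openSimplex a :=
    ⟨fun _ => ((n:ℝ)+1)⁻¹, fun _ => by positivity, hsum_inv, hbary_sum⟩
  refine ⟨hbary_mem, ?_⟩
  intro p hp hpne
  rw [closure_openSimplex a] at hp
  obtain ⟨t, ⟨ht0, ht1⟩, htp⟩ := hp
  replace htp : ∑ i, t i • a i = p := htp
  obtain ⟨j, hj⟩ := Finite.exists_min t
  set μ := t j with hμ
  set s := ((n:ℝ)+1) * μ with hs
  have hμ0 : 0 ≤ μ := ht0 j
  have hs0 : 0 ≤ s := by positivity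
  have hs_le : s ≤ 1 := by
    have : ∑ _i : Fin (n+1), μ ≤ ∑ i, t i := Finset.sum_le_sum fun i _ => hj i
    rw [ht1, Finset.sum_const, Finset.card_univ, Fintype.card_fin, nsmul_eq_mul] at this
    rw [hs]; push_cast at this ⊢; linarith
  have hs1 : s < 1 := by
    rcases lt_or_eq_of_le hs_le with h | h
    · exact h
    · exfalso
      -- all coordinates equal μ, so p = bary
      have hall : ∀ i, t i = μ := by
        have hz : ∑ i, (t i - μ) = 0 := by
          rw [Finset.sum_sub_distrib, ht1, Finset.sum_const, Finset.card_univ,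
            Fintype.card_fin, nsmul_eq_mul]
          push_cast
          rw [hs] at h; linarith
        intro i
        have := (Finset.sum_eq_zero_iff_of_nonneg (fun i _ => by linarith [hj i])).mp hz
          i (Finset.mem_univ i)
        linarith
      have hμval : μ = ((n:ℝ)+1)⁻¹ := by
        field_simp [hs] at h ⊢; linarith
      apply hpne
      rw [← htp, ← hbary_sum]
      exact Finset.sum_congr rfl fun i _ => by rw [hall i, hμval]
  have h1s : (0:ℝ) < 1 - s := by linarith
  set r : Fin (n+1) → ℝ := fun i => (t i - μ) / (1 - s) with hr
  have hr0 : ∀ i, 0 ≤ r i := fun i => div_nonneg (by linarith [hj i]) h1s.le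
  have hr1 : ∑ i, r i = 1 := by
    rw [hr]
    simp only
    rw [← Finset.sum_div, Finset.sum_sub_distrib, ht1, Finset.sum_const, Finset.card_univ,
      Fintype.card_fin, nsmul_eq_mul]
    rw [hs]; push_cast; field_simp
    exact div_self (ne_of_gt (by linarith))
  have hrj : r j = 0 := by simp [hr]; left; linarith [hμ]
  set u : Fin m → ℝ := ∑ i, r i • a i with hu
  have hu_cl : u ∈ closure (openSimplex a) := by
    rw [closure_openSimplex a]; exact ⟨r, ⟨hr0, hr1⟩, rfl⟩
  have hu_not : u ∉ openSimplex a := by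
    rintro ⟨q, hq0, hq1, hqu⟩
    have hqr : q = r := coeff_unique ha hq1 hr1 (by rw [hqu, hu])
    have hj0 := hq0 j
    rw [hqr, hrj] at hj0
    exact lt_irrefl 0 hj0
  have hμs : s * ((n:ℝ)+1)⁻¹ = μ := by rw [hs]; field_simp
  have hpeq : p = (1 - s) • u + s • bary := by
    rw [hu, ← hbary_sum, Finset.smul_sum, Finset.smul_sum, ← Finset.sum_add_distrib, ← htp]
    refine Finset.sum_congr rfl fun i _ => ?_
    rw [smul_smul, smul_smul, ← add_smul]
    congr 1
    rw [hr]
    field_simp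
    ring
  refine ⟨(u, s), ⟨⟨hu_cl, hu_not⟩, ⟨hs0, hs1⟩, hpeq⟩, ?_⟩
  rintro ⟨u', s'⟩ ⟨⟨hu'cl, hu'not⟩, ⟨hs'0, hs'1⟩, hp'⟩
  simp only at hp' hu'cl hu'not hs'0 hs'1 ⊢
  rw [closure_openSimplex a] at hu'cl
  obtain ⟨r', ⟨hr'0, hr'1⟩, hr'u⟩ := hu'cl
  replace hr'u : ∑ i, r' i • a i = u' := hr'u
  have hj' : ∃ j', r' j' = 0 := by
    by_contra h
    push_neg at h
    exact hu'not ⟨r', fun i => lt_of_le_of_ne (hr'0 i) (Ne.symm (h i)), hr'1, hr'u⟩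
  obtain ⟨j', hr'j'⟩ := hj'
  set q : Fin (n+1) → ℝ := fun i => (1 - s') * r' i + s' * ((n:ℝ)+1)⁻¹ with hq
  have hq1 : ∑ i, q i = 1 := by
    rw [hq]
    simp only
    rw [Finset.sum_add_distrib, ← Finset.mul_sum, hr'1, ← Finset.mul_sum, hsum_inv]
    ring
  have hqp : ∑ i, q i • a i = p := by
    rw [hp', ← hr'u, ← hbary_sum, Finset.smul_sum, Finset.smul_sum, ← Finset.sum_add_distrib]
    refine Finset.sum_congr rfl fun i _ => ?_
    rw [smul_smul, smul_smul, ← add_smul]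
  have hqt : q = t := coeff_unique ha hq1 ht1 (by rw [hqp, htp])
  have h1 : μ ≤ s' * ((n:ℝ)+1)⁻¹ := by
    have := hj j'
    rw [← hqt] at this
    simp only [hq, hr'j', mul_zero, zero_add] at this
    exact this
  have h2 : s' * ((n:ℝ)+1)⁻¹ ≤ μ := by
    have := congrFun hqt j
    simp only [hq] at this
    nlinarith [hr'0 j, mul_nonneg (sub_nonneg.mpr hs'1.le) (hr'0 j)]
  have hs' : s' = s := by
    have : s' * ((n:ℝ)+1)⁻¹ = μ := le_antisymm h2 h1
    rw [hs]
    field_simp at this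
    linarith
  have hu' : u' = u := by
    have : (1 - s) • u' = (1 - s) • u := by
      rw [← hs'] at hpeq ⊢
      have := hp'.symm.trans hpeq
      have h2 := congrArg (fun x => x - s' • bary) this
      simpa using h2
    exact smul_right_injective _ h1s.ne' this
  rw [hu', hs']
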